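/- Let n ≥ 2 and let M = (m_ij) be an n×n real matrix with strictly positive entries that is reciprocal, i.e. m_ji = 1/m_ij for all i, j. Define e : (ℝ₊)ⁿ → ℝ by e(x₁,…,xₙ) = Σ_{i=1}^{n} Σ_{j=1}^{n} (ln m_ij − ln(x_i/x_j))². Suppose μ ∈ (ℝ₊)ⁿ satisfies μ_i^{n−1} = Π_{j≠i} (m_ij · μ_j) for every i. Then the Hessian matrix H of e at the point μ has entries H_ii = 4(n−1)/μ_i² on the diagonal and H_ij = −4/(μ_i μ_j) for i ≠ j. -/

import Mathlib

private lemma hre_aux_open (n : ℕ) : IsOpen {x : Fin n → ℝ | ∀ k, 0 < x k} := by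
  have h : {x : Fin n → ℝ | ∀ k, 0 < x k} = ⋂ k, (fun x : Fin n → ℝ => x k) ⁻¹' Set.Ioi 0 := by
    ext x; simp [Set.mem_iInter]
  rw [h]
  exact isOpen_iInter_of_finite fun k =>
    (continuous_apply k).isOpen_preimage _ isOpen_Ioi

private lemma hre_aux_inner (n : ℕ) (m : Fin n → Fin n → ℝ) (j : Fin n)
    (x : Fin n → ℝ) (hx : ∀ k, 0 < x k) :
    fderiv ℝ (fun y : Fin n → ℝ => ∑ a, ∑ b, (Real.log (m a b) - Real.log (y a / y b)) ^ 2)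
      x (Pi.single j 1)
    = ∑ a, ∑ b, 2 * (Real.log (m a b) - (Real.log (x a) - Real.log (x b))) *
        (((if b = j then (1:ℝ) else 0) - (if a = j then (1:ℝ) else 0)) * (x j)⁻¹) := by
  have heq : (fun y : Fin n → ℝ => ∑ a, ∑ b, (Real.log (m a b) - Real.log (y a / y b)) ^ 2)
      =ᶠ[nhds x] (fun y => ∑ a, ∑ b, (Real.log (m a b) - (Real.log (y a) - Real.log (y b))) ^ 2) := by
    filter_upwards [(hre_aux_open n).mem_nhds hx] with y hy
    exact Finset.sum_congr rfl fun a _ => Finset.sum_congr rfl fun b _ => by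
      rw [Real.log_div (ne_of_gt (hy a)) (ne_of_gt (hy b))]
  rw [heq.fderiv_eq]
  have hproj : ∀ k : Fin n, HasFDerivAt (fun y : Fin n → ℝ => y k)
      ((ContinuousLinearMap.proj k : (Fin n → ℝ) →L[ℝ] ℝ)) x := fun k =>
    (ContinuousLinearMap.proj k : (Fin n → ℝ) →L[ℝ] ℝ).hasFDerivAt
  have hlog : ∀ k : Fin n, HasFDerivAt (fun y : Fin n → ℝ => Real.log (y k))
      ((x k)⁻¹ • ContinuousLinearMap.proj k) x := fun k =>
    (hproj k).log (ne_of_gt (hx k))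
  have H : HasFDerivAt (fun y : Fin n → ℝ => ∑ a, ∑ b,
        (Real.log (m a b) - (Real.log (y a) - Real.log (y b))) ^ 2)
      (∑ a, ∑ b, ((((2:ℕ):ℝ) * (Real.log (m a b) - (Real.log (x a) - Real.log (x b))) ^ (2-1)) •
        (-((x a)⁻¹ • (ContinuousLinearMap.proj a : (Fin n → ℝ) →L[ℝ] ℝ)
            - (x b)⁻¹ • ContinuousLinearMap.proj b)))) x :=
    HasFDerivAt.fun_sum fun a _ => HasFDerivAt.fun_sum fun b _ =>
      (hasDerivAt_pow 2 _).comp_hasFDerivAt x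
        (((hlog a).sub (hlog b)).const_sub (Real.log (m a b)))
  rw [H.fderiv]
  simp only [ContinuousLinearMap.coe_sum', Finset.sum_apply, ContinuousLinearMap.coe_smul',
    Pi.smul_apply, ContinuousLinearMap.neg_apply, ContinuousLinearMap.sub_apply,
    ContinuousLinearMap.smul_apply, ContinuousLinearMap.proj_apply, Pi.single_apply,
    smul_eq_mul, Nat.cast_ofNat, pow_one]
  refine Finset.sum_congr rfl fun a _ => Finset.sum_congr rfl fun b _ => ?_
  by_cases ha : a = j <;> by_cases hb : b = j <;> simp [ha, hb, eq_comm] <;> ring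

private lemma hre_aux_outer (n : ℕ) (m : Fin n → Fin n → ℝ) (i j : Fin n)
    (μ : Fin n → ℝ) (hμ : ∀ k, 0 < μ k) :
    fderiv ℝ (fun x : Fin n → ℝ => ∑ a, ∑ b,
        2 * (Real.log (m a b) - (Real.log (x a) - Real.log (x b))) *
        (((if b = j then (1:ℝ) else 0) - (if a = j then (1:ℝ) else 0)) * (x j)⁻¹)) μ
      (Pi.single i 1)
    = ∑ a, ∑ b,
        ((2 * (Real.log (m a b) - (Real.log (μ a) - Real.log (μ b))) *
          (((if b = j then (1:ℝ) else 0) - (if a = j then (1:ℝ) else 0)) *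
            (-(μ j ^ 2)⁻¹ * (if j = i then (1:ℝ) else 0)))
        + (((if b = j then (1:ℝ) else 0) - (if a = j then (1:ℝ) else 0)) * (μ j)⁻¹) *
          (2 * ((if b = i then (1:ℝ) else 0) * (μ b)⁻¹ - (if a = i then (1:ℝ) else 0) * (μ a)⁻¹)))) := by
  have hproj : ∀ k : Fin n, HasFDerivAt (fun y : Fin n → ℝ => y k)
      ((ContinuousLinearMap.proj k : (Fin n → ℝ) →L[ℝ] ℝ)) μ := fun k =>
    (ContinuousLinearMap.proj k : (Fin n → ℝ) →L[ℝ] ℝ).hasFDerivAt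
  have hlog : ∀ k : Fin n, HasFDerivAt (fun y : Fin n → ℝ => Real.log (y k))
      ((μ k)⁻¹ • ContinuousLinearMap.proj k) μ := fun k =>
    (hproj k).log (ne_of_gt (hμ k))
  have hinv : HasFDerivAt (fun y : Fin n → ℝ => (y j)⁻¹)
      ((-(μ j ^ 2)⁻¹) • ContinuousLinearMap.proj j) μ :=
    (hasDerivAt_inv (ne_of_gt (hμ j))).comp_hasFDerivAt μ (hproj j)
  have H : HasFDerivAt (fun x : Fin n → ℝ => ∑ a, ∑ b,
        2 * (Real.log (m a b) - (Real.log (x a) - Real.log (x b))) *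
        (((if b = j then (1:ℝ) else 0) - (if a = j then (1:ℝ) else 0)) * (x j)⁻¹))
      (∑ a, ∑ b,
        ((2 * (Real.log (m a b) - (Real.log (μ a) - Real.log (μ b)))) •
          ((((if b = j then (1:ℝ) else 0) - (if a = j then (1:ℝ) else 0))) •
            ((-(μ j ^ 2)⁻¹) • (ContinuousLinearMap.proj j : (Fin n → ℝ) →L[ℝ] ℝ))) +
        (((if b = j then (1:ℝ) else 0) - (if a = j then (1:ℝ) else 0)) * (μ j)⁻¹) •
          ((2:ℝ) • (-((μ a)⁻¹ • (ContinuousLinearMap.proj a : (Fin n → ℝ) →L[ℝ] ℝ) -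
            (μ b)⁻¹ • ContinuousLinearMap.proj b))))) μ :=
    HasFDerivAt.fun_sum fun a _ => HasFDerivAt.fun_sum fun b _ =>
      ((((hlog a).sub (hlog b)).const_sub (Real.log (m a b))).const_mul 2).mul
        (hinv.const_mul _)
  rw [H.fderiv]
  simp only [ContinuousLinearMap.coe_sum', Finset.sum_apply, ContinuousLinearMap.add_apply,
    ContinuousLinearMap.coe_smul', Pi.smul_apply, ContinuousLinearMap.neg_apply,
    ContinuousLinearMap.sub_apply, ContinuousLinearMap.smul_apply,
    ContinuousLinearMap.proj_apply, Pi.single_apply, smul_eq_mul]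
  refine Finset.sum_congr rfl fun a _ => Finset.sum_congr rfl fun b _ => ?_
  ring

private lemma hre_aux_sum (n : ℕ) (μ : Fin n → ℝ) (hμ : ∀ k, 0 < μ k)
    (T : Fin n → Fin n → ℝ) (i j : Fin n)
    (hrow : ∑ b, T j b = 0) (hcol : ∑ a, T a j = 0) :
    ∑ a, ∑ b,
        ((2 * T a b *
          (((if b = j then (1:ℝ) else 0) - (if a = j then (1:ℝ) else 0)) *
            (-(μ j ^ 2)⁻¹ * (if j = i then (1:ℝ) else 0)))
        + (((if b = j then (1:ℝ) else 0) - (if a = j then (1:ℝ) else 0)) * (μ j)⁻¹) *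
          (2 * ((if b = i then (1:ℝ) else 0) * (μ b)⁻¹ - (if a = i then (1:ℝ) else 0) * (μ a)⁻¹))))
    = if i = j then 4 * ((n : ℝ) - 1) / (μ i) ^ 2 else -4 / (μ i * μ j) := by
  have h1 : ∑ a : Fin n, ∑ b, T a b * (if b = j then (1:ℝ) else 0) = 0 := by
    simp only [mul_ite, mul_one, mul_zero, Finset.sum_ite_eq', Finset.mem_univ, if_true]
    exact hcol
  have h2 : ∑ a : Fin n, ∑ b, T a b * (if a = j then (1:ℝ) else 0) = 0 := by
    have e : ∀ a : Fin n, ∑ b, T a b * (if a = j then (1:ℝ) else 0)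
        = (if a = j then ∑ b, T j b else 0) := by
      intro a
      rcases eq_or_ne a j with rfl | h
      · simp
      · simp [h]
    rw [Finset.sum_congr rfl fun a _ => e a]
    simp [Finset.sum_ite_eq', hrow]
  have h3 : ∑ a : Fin n, ∑ b,
      (if b = j then (1:ℝ) else 0) * (if b = i then (1:ℝ) else 0) * (μ b)⁻¹
      = if i = j then (n:ℝ) * (μ i)⁻¹ else 0 := by
    rcases eq_or_ne i j with h | h <;>
      simp [h, ite_mul, mul_ite, Finset.sum_ite_eq', eq_comm, Finset.card_univ, mul_comm]
  have h4 : ∑ a : Fin n, ∑ b,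
      (if b = j then (1:ℝ) else 0) * (if a = i then (1:ℝ) else 0) * (μ a)⁻¹ = (μ i)⁻¹ := by
    simp [ite_mul, mul_ite, Finset.sum_ite_eq', eq_comm]
  have h5 : ∑ a : Fin n, ∑ b,
      (if a = j then (1:ℝ) else 0) * (if b = i then (1:ℝ) else 0) * (μ b)⁻¹ = (μ i)⁻¹ := by
    simp [ite_mul, mul_ite, Finset.sum_ite_eq', eq_comm]
  have h6 : ∑ a : Fin n,
      ((if a = j then (1:ℝ) else 0) * (if a = i then (1:ℝ) else 0)) * (∑ _b : Fin n, (μ a)⁻¹)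
      = if i = j then (n:ℝ) * (μ i)⁻¹ else 0 := by
    rcases eq_or_ne i j with h | h <;>
      simp [h, ite_mul, mul_ite, Finset.sum_ite_eq', eq_comm, Finset.card_univ, mul_comm]
  have expand : ∀ a b : Fin n,
      (2 * T a b *
          (((if b = j then (1:ℝ) else 0) - (if a = j then (1:ℝ) else 0)) *
            (-(μ j ^ 2)⁻¹ * (if j = i then (1:ℝ) else 0)))
        + (((if b = j then (1:ℝ) else 0) - (if a = j then (1:ℝ) else 0)) * (μ j)⁻¹) *
          (2 * ((if b = i then (1:ℝ) else 0) * (μ b)⁻¹ - (if a = i then (1:ℝ) else 0) * (μ a)⁻¹)))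
      = (2 * (-(μ j ^ 2)⁻¹ * (if j = i then (1:ℝ) else 0))) * (T a b * (if b = j then (1:ℝ) else 0))
        + (-(2 * (-(μ j ^ 2)⁻¹ * (if j = i then (1:ℝ) else 0)))) * (T a b * (if a = j then (1:ℝ) else 0))
        + ((2 * (μ j)⁻¹) * ((if b = j then (1:ℝ) else 0) * (if b = i then (1:ℝ) else 0) * (μ b)⁻¹)
        + (-(2 * (μ j)⁻¹)) * ((if b = j then (1:ℝ) else 0) * (if a = i then (1:ℝ) else 0) * (μ a)⁻¹)
        + ((-(2 * (μ j)⁻¹)) * ((if a = j then (1:ℝ) else 0) * (if b = i then (1:ℝ) else 0) * (μ b)⁻¹)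
        + (2 * (μ j)⁻¹) * ((if a = j then (1:ℝ) else 0) * (if a = i then (1:ℝ) else 0) * (μ a)⁻¹))) := by
    intro a b; ring
  rw [Finset.sum_congr rfl fun a _ => Finset.sum_congr rfl fun b _ => expand a b]
  simp only [Finset.sum_add_distrib, ← Finset.mul_sum]
  rw [h1, h2, h3, h4, h5, h6]
  rcases eq_or_ne i j with rfl | h
  · simp only [if_pos rfl, if_true]
    have hne : μ i ≠ 0 := ne_of_gt (hμ i)
    field_simp
    ring
  · simp only [if_neg h, if_neg (Ne.symm h)]
    have h1 : μ i ≠ 0 := ne_of_gt (hμ i)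
    have h2 : μ j ≠ 0 := ne_of_gt (hμ j)
    field_simp
    ring

private lemma hre_aux_rowcol (n : ℕ) (hn : 2 ≤ n)
    (m : Fin n → Fin n → ℝ) (hmpos : ∀ i j, 0 < m i j)
    (hrec : ∀ i j, m j i = 1 / m i j)
    (μ : Fin n → ℝ) (hμpos : ∀ i, 0 < μ i)
    (hgeo : ∀ i, μ i ^ (n - 1) = ∏ j ∈ Finset.univ.erase i, (m i j * μ j)) :
    (∀ k, ∑ b, (Real.log (m k b) - (Real.log (μ k) - Real.log (μ b))) = 0) ∧
    (∀ k, ∑ a, (Real.log (m a k) - (Real.log (μ a) - Real.log (μ k))) = 0) := by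
  have hdiag : ∀ k, m k k = 1 := by
    intro k
    have h := hrec k k
    have h2 : m k k * m k k = 1 := by
      nth_rewrite 2 [h]
      field_simp [(hmpos k k).ne']
    have h3 : (m k k - 1) * (m k k + 1) = 0 := by linear_combination h2
    rcases mul_eq_zero.1 h3 with h4 | h4
    · linarith
    · nlinarith [hmpos k k]
  have hrow : ∀ k, ∑ b, (Real.log (m k b) - (Real.log (μ k) - Real.log (μ b))) = 0 := by
    intro k
    have hlog : ((n:ℝ) - 1) * Real.log (μ k)
        = ∑ b ∈ Finset.univ.erase k, (Real.log (m k b) + Real.log (μ b)) := by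
      have h1 : Real.log (μ k ^ (n - 1))
          = Real.log (∏ b ∈ Finset.univ.erase k, (m k b * μ b)) := by rw [hgeo k]
      rw [Real.log_pow, Real.log_prod
        (fun b _ => (mul_pos (hmpos k b) (hμpos b)).ne')] at h1
      have hc : ((n - 1 : ℕ) : ℝ) = (n : ℝ) - 1 := by
        have h1n : (1:ℕ) ≤ n := by omega
        push_cast [Nat.cast_sub h1n]
        ring
      rw [hc] at h1
      rw [h1]
      exact Finset.sum_congr rfl fun b _ =>
        Real.log_mul (hmpos k b).ne' (hμpos b).ne'
    have hsum : ∑ b, (Real.log (m k b) + Real.log (μ b))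
        = ((n:ℝ) - 1) * Real.log (μ k) + (Real.log (m k k) + Real.log (μ k)) := by
      rw [hlog]
      exact (Finset.sum_erase_add _ _ (Finset.mem_univ k)).symm
    have hmkk : Real.log (m k k) = 0 := by rw [hdiag k, Real.log_one]
    have hcard : (Finset.univ : Finset (Fin n)).card = n := by simp
    have hsplit : ∑ b, (Real.log (m k b) - (Real.log (μ k) - Real.log (μ b)))
        = ∑ b, (Real.log (m k b) + Real.log (μ b)) - ∑ _b : Fin n, Real.log (μ k) := by
      rw [← Finset.sum_sub_distrib]
      exact Finset.sum_congr rfl fun b _ => by ring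
    rw [hsplit, hsum, hmkk]
    simp [Finset.sum_const, hcard, nsmul_eq_mul]
    ring
  refine ⟨hrow, fun k => ?_⟩
  have e : ∀ a, Real.log (m a k) - (Real.log (μ a) - Real.log (μ k))
      = -(Real.log (m k a) - (Real.log (μ k) - Real.log (μ a))) := by
    intro a
    rw [hrec k a, one_div, Real.log_inv]
    ring
  rw [Finset.sum_congr rfl fun a _ => e a, Finset.sum_neg_distrib, hrow k, neg_zero]

/-- For a reciprocal positive `n × n` matrix `M` (`n ≥ 2`) and the multiplicative
error function `e`, if the positive vector `μ` satisfies the geometric averaging equations,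
then the Hessian of `e` at `μ` has entries `4(n-1)/μ i ^ 2` on the diagonal and
`-4/(μ i * μ j)` off the diagonal. -/
theorem hre_geometric_hessian
    (n : ℕ) (hn : 2 ≤ n)
    (m : Fin n → Fin n → ℝ)
    (hmpos : ∀ i j, 0 < m i j)
    (hrec : ∀ i j, m j i = 1 / m i j)
    (μ : Fin n → ℝ) (hμpos : ∀ i, 0 < μ i)
    (hgeo : ∀ i, μ i ^ (n - 1) = ∏ j ∈ Finset.univ.erase i, (m i j * μ j)) :
    ∀ i j : Fin n,
      fderiv ℝ
        (fun x : Fin n → ℝ =>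
          fderiv ℝ
            (fun y : Fin n → ℝ =>
              ∑ a, ∑ b, (Real.log (m a b) - Real.log (y a / y b)) ^ 2)
            x (Pi.single j (1 : ℝ)))
        μ (Pi.single i (1 : ℝ)) =
      if i = j then 4 * ((n : ℝ) - 1) / (μ i) ^ 2 else -4 / (μ i * μ j) := by
  intro i j
  have heq2 : (fun x : Fin n → ℝ =>
        fderiv ℝ (fun y : Fin n → ℝ =>
          ∑ a, ∑ b, (Real.log (m a b) - Real.log (y a / y b)) ^ 2) x (Pi.single j (1 : ℝ)))
      =ᶠ[nhds μ] (fun x : Fin n → ℝ => ∑ a, ∑ b,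
        2 * (Real.log (m a b) - (Real.log (x a) - Real.log (x b))) *
        (((if b = j then (1:ℝ) else 0) - (if a = j then (1:ℝ) else 0)) * (x j)⁻¹)) := by
    filter_upwards [(hre_aux_open n).mem_nhds (fun k => hμpos k : μ ∈ {x : Fin n → ℝ | ∀ k, 0 < x k})]
      with x hx using hre_aux_inner n m j x hx
  rw [heq2.fderiv_eq, hre_aux_outer n m i j μ hμpos]
  obtain ⟨hrow, hcol⟩ := hre_aux_rowcol n hn m hmpos hrec μ hμpos hgeo
  exact hre_aux_sum n μ hμpos
    (fun a b => Real.log (m a b) - (Real.log (μ a) - Real.log (μ b))) i j (hrow j) (hcol j)
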